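/- Let $X$ be a set and let $R, S, T, U \subseteq X$ be subsets with $R \cap S = R \cap T = R \cap U = S \cap T = \emptyset$. For the halo of groups of finitely supported permutations (i.e. $L(Y) := \mathrm{FSym}(Y)$, the finitely supported permutations of $X$ supported in $Y$, for each $Y \subseteq X$), the inclusion $L(R \cup S) \cdot L(U) \cap L(R \cup T) \subseteq L(R) \cdot L(T)$ holds. That is: if $\sigma$ is a finitely supported permutation of $X$ supported in $R \cup S$, $\nu$ is supported in $U$, and the product $\sigma\nu$ is supported in $R \cup T$, then $\sigma\nu$ can be written as a product of a permutation supported in $R$ with a permutation supported in $T$. -/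

import Mathlib

/-- If a permutation fixes everything outside `A` and moves `x`, then both `x`
and `f x` lie in `A`. -/
lemma fsym_full_aux {X : Type*} (f : Equiv.Perm X) (A : Set X)
    (h : ∀ x, x ∉ A → f x = x) : ∀ x, f x ≠ x → x ∈ A ∧ f x ∈ A := by
  intro x hx
  constructor
  · by_contra hxA; exact hx (h x hxA)
  · by_contra hfA
    have := h (f x) hfA
    exact hx (f.injective this)

/-- Fullness of the halo of finitely supported permutations: if `σ` is a finitely
supported permutation supported in `R ∪ S`, `ν` is supported in `U`, and `σν` is
supported in `R ∪ T`, with `R ∩ S = R ∩ T = R ∩ U = S ∩ T = ∅`, then `σν` is a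
product of a finitely supported permutation supported in `R` with one supported
in `T`. -/
theorem fsym_full {X : Type*} (R S T U : Set X)
    (hRS : R ∩ S = ∅) (hRT : R ∩ T = ∅) (hRU : R ∩ U = ∅) (hST : S ∩ T = ∅)
    (σ ν : Equiv.Perm X)
    (hσ : ∀ x, x ∉ R ∪ S → σ x = x) (hσf : {x | σ x ≠ x}.Finite)
    (hν : ∀ x, x ∉ U → ν x = x) (hνf : {x | ν x ≠ x}.Finite)
    (hσν : ∀ x, x ∉ R ∪ T → (σ * ν) x = x) :
    ∃ a b : Equiv.Perm X,
      (∀ x, x ∉ R → a x = x) ∧ {x | a x ≠ x}.Finite ∧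
      (∀ x, x ∉ T → b x = x) ∧ {x | b x ≠ x}.Finite ∧
      σ * ν = a * b := by
  classical
  set π : Equiv.Perm X := σ * ν with hπ
  -- finiteness of the support of π
  have hπf : {x | π x ≠ x}.Finite := by
    apply (hσf.union hνf).subset
    intro x hx
    simp only [Set.mem_setOf_eq, Set.mem_union] at hx ⊢
    by_contra h
    push_neg at h
    obtain ⟨h1, h2⟩ := h
    apply hx
    show σ (ν x) = x
    rw [h2, h1]
  -- π maps R into R
  have hmem : ∀ x ∈ R, π x ∈ R := by
    intro x hxR
    have hxU : x ∉ U := fun hu => Set.eq_empty_iff_forall_notMem.mp hRU x ⟨hxR, hu⟩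
    have hνx : ν x = x := hν x hxU
    have hπx : π x = σ x := by show σ (ν x) = _; rw [hνx]
    by_cases hfix : σ x = x
    · rw [hπx, hfix]; exact hxR
    · have h1 := (fsym_full_aux σ (R ∪ S) hσ x hfix).2
      have h2 : π x ∈ R ∪ T := by
        have : π x ≠ x := by rw [hπx]; exact hfix
        exact (fsym_full_aux π (R ∪ T) hσν x this).2
      rw [hπx] at h2
      rcases h2 with h2 | h2
      · rw [hπx]; exact h2
      · rcases h1 with h1 | h1
        · rw [hπx]; exact h1
        · exact absurd (Set.eq_empty_iff_forall_notMem.mp hST (σ x) ⟨h1, h2⟩) (fun h => h)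
  -- π restricts to a bijection of R (finite-support argument)
  have hiff : ∀ x, x ∈ R ↔ π x ∈ R := by
    intro x
    constructor
    · exact hmem x
    · intro hpx
      by_contra hxR
      have hπx : π x ≠ x := fun h => hxR (h ▸ hpx)
      -- F = moved points of π inside R
      set F : Set X := {y | y ∈ R ∧ π y ≠ y} with hF
      have hFfin : F.Finite := hπf.subset (fun y hy => hy.2)
      have hmaps : Set.MapsTo π F F := by
        intro y hy
        refine ⟨hmem y hy.1, ?_⟩
        intro h
        exact hy.2 (π.injective h)
      have hinj : Set.InjOn π F := fun a _ b _ h => π.injective h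
      have hsurj : Set.SurjOn π F F :=
        (Set.Finite.injOn_iff_bijOn_of_mapsTo hFfin hmaps).mp hinj |>.surjOn
      -- π x ∈ R; either π x ∈ F or π x is fixed
      by_cases hy : π (π x) ≠ π x
      · obtain ⟨z, hzF, hz⟩ := hsurj ⟨hpx, hy⟩
        have : z = x := π.injective hz
        exact hxR (this ▸ hzF.1)
      · push_neg at hy
        exact hπx (π.injective hy)
  -- build a
  let a : Equiv.Perm X := Equiv.Perm.ofSubtype (π.subtypePerm (fun x => (hiff x).symm) : Equiv.Perm {x // x ∈ R})
  have haR : ∀ x, x ∉ R → a x = x := fun x hx =>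
    Equiv.Perm.ofSubtype_apply_of_not_mem _ hx
  have haR' : ∀ x (hx : x ∈ R), a x = π x := fun x hx => by
    simpa using Equiv.Perm.ofSubtype_apply_of_mem (π.subtypePerm (fun x => (hiff x).symm)) hx
  have haf : {x | a x ≠ x}.Finite := by
    apply hπf.subset
    intro x hx
    simp only [Set.mem_setOf_eq] at hx ⊢
    by_cases hxR : x ∈ R
    · rw [haR' x hxR] at hx; exact hx
    · exact absurd (haR x hxR) hx
  refine ⟨a, a⁻¹ * π, haR, haf, ?_, ?_, by group⟩
  · intro x hxT
    by_cases hxR : x ∈ R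
    · have : a x = π x := haR' x hxR
      show a⁻¹ (π x) = x
      rw [← this]; exact a.symm_apply_apply x
    · have hx : x ∉ R ∪ T := fun h => h.elim hxR hxT
      have hπx : π x = x := hσν x hx
      show a⁻¹ (π x) = x
      rw [hπx]
      have : a x = x := haR x hxR
      exact a.injective (by rw [← Equiv.Perm.mul_apply, mul_inv_cancel, Equiv.Perm.one_apply, this])
  · apply (haf.union hπf).subset
    intro x hx
    simp only [Set.mem_setOf_eq, Set.mem_union] at hx ⊢
    by_contra h
    push_neg at h
    obtain ⟨h1, h2⟩ := h
    apply hx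
    show a⁻¹ (π x) = x
    rw [h2]
    exact a.injective (by rw [← Equiv.Perm.mul_apply, mul_inv_cancel, Equiv.Perm.one_apply, h1])
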